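/- Fix α > 0 and let ρ: ℝ → (0,1) be continuous with ∫_{−∞}^{0} (1−ρ(w)) dw < ∞ and ∫_{0}^{∞} ρ(w) dw < ∞. Assume there exist C₁ ≥ C₂ > 0 such that ρ^∞(v;C₂) ≤ ρ(v) ≤ ρ^∞(v;C₁) for all v ∈ ℝ. Define ρ_U(u) := (1 − ρ(ζ^{-1}(u)))^{-1} − 1 for u > 0, where ζ(v) = ∫_{−∞}^{v} (1−ρ(w)) dw. Then (C₂/C₁)·ρ_U^∞(u) ≤ ρ_U(u) ≤ (C₁/C₂)·ρ_U^∞(u) for all u > 0. -/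

import Mathlib

open Real MeasureTheory Set Filter

/-- `ρ_U^∞(u) = 1/(e^{αu} - 1)`. -/
noncomputable def rhoUInf (α u : ℝ) : ℝ := 1 / (Real.exp (α * u) - 1)

/-- `ρ^∞(v; C) = C/(e^{αv} + C)`. -/
noncomputable def rhoInf (α v C : ℝ) : ℝ := C / (Real.exp (α * v) + C)

/-- `ζ(v) = ∫_{-∞}^v (1 - ρ(w)) dw`. -/
noncomputable def zetaFn (ρ : ℝ → ℝ) (v : ℝ) : ℝ := ∫ w in Set.Iic v, (1 - ρ w)

/-- The inverse of `ζ`. -/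
noncomputable def zetaInv (ρ : ℝ → ℝ) (u : ℝ) : ℝ := Function.invFun (zetaFn ρ) u

/-- `ρ_U(u) = (1 - ρ(ζ⁻¹(u)))⁻¹ - 1`. -/
noncomputable def rhoUOf (ρ : ℝ → ℝ) (u : ℝ) : ℝ := (1 - ρ (zetaInv ρ u))⁻¹ - 1

-- aux: exp(α w) integrable on Iic v
lemma aux_integrableOn_exp_mul_Iic {α : ℝ} (hα : 0 < α) (v : ℝ) :
    IntegrableOn (fun w => Real.exp (α * w)) (Set.Iic v) := by
  have hderiv : ∀ x : ℝ, HasDerivAt (fun x => Real.exp (α * x) / α) (Real.exp (α * x)) x := by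
    intro x
    have h1 : HasDerivAt (fun x : ℝ => α * x) α x := by
      simpa using (hasDerivAt_id x).const_mul α
    have h2 := (h1.exp).div_const α
    refine h2.congr_deriv ?_
    field_simp
  refine integrableOn_Iic_of_intervalIntegral_norm_bounded (Real.exp (α*v)/α) v
    (fun y => ((Real.continuous_exp.comp (continuous_const.mul continuous_id)).integrableOn_Ioc))
    tendsto_id ?_
  filter_upwards with y
  have hco : ∀ x, x ∈ Set.uIcc y v → ContinuousAt (fun x => Real.exp (α * x)) x := fun x _ =>
    (Real.continuous_exp.comp (continuous_const.mul continuous_id)).continuousAt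
  have := intervalIntegral.integral_eq_sub_of_hasDerivAt (fun x _ => hderiv x)
    ((Real.continuous_exp.comp (continuous_const.mul continuous_id)).intervalIntegrable y v)
  have hnorm : (∫ x in y..v, ‖Real.exp (α * x)‖) = ∫ x in y..v, Real.exp (α * x) := by
    congr 1; ext x; exact Real.norm_of_nonneg (Real.exp_pos _).le
  simp only [id] at *
  rw [hnorm, this]
  have : Real.exp (α * y) / α > 0 := div_pos (Real.exp_pos _) hα
  linarith

-- g C w := exp(αw)/(exp(αw)+C)
lemma aux_integrableOn_g {α C : ℝ} (hα : 0 < α) (hC : 0 < C) (v : ℝ) :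
    IntegrableOn (fun w => Real.exp (α * w) / (Real.exp (α * w) + C)) (Set.Iic v) := by
  have hcont : Continuous (fun w => Real.exp (α * w) / (Real.exp (α * w) + C)) := by
    apply Continuous.div
    · exact Real.continuous_exp.comp (continuous_const.mul continuous_id)
    · exact (Real.continuous_exp.comp (continuous_const.mul continuous_id)).add continuous_const
    · intro x; positivity
  refine Integrable.mono' ((aux_integrableOn_exp_mul_Iic hα v).div_const C) hcont.aestronglyMeasurable ?_
  filter_upwards with w
  rw [Real.norm_of_nonneg (by positivity)]
  rw [div_le_div_iff₀ (by positivity) hC]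
  nlinarith [Real.exp_pos (α * w), Real.exp_pos (α * w)]

lemma aux_integral_g {α C : ℝ} (hα : 0 < α) (hC : 0 < C) (v : ℝ) :
    ∫ w in Set.Iic v, Real.exp (α * w) / (Real.exp (α * w) + C)
      = (1/α) * Real.log ((Real.exp (α * v) + C) / C) := by
  have hderiv : ∀ x : ℝ, HasDerivAt (fun x => (1/α) * Real.log (Real.exp (α * x) + C))
      (Real.exp (α * x) / (Real.exp (α * x) + C)) x := by
    intro x
    have h1 : HasDerivAt (fun x : ℝ => α * x) α x := by
      simpa using (hasDerivAt_id x).const_mul α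
    have h2 : HasDerivAt (fun x : ℝ => Real.exp (α * x) + C) (Real.exp (α * x) * α) x :=
      h1.exp.add_const C
    have h3 := (h2.log (by positivity)).const_mul (1/α)
    refine h3.congr_deriv ?_
    field_simp
  have htends : Tendsto (fun x => (1/α) * Real.log (Real.exp (α * x) + C)) atBot
      (nhds ((1/α) * Real.log C)) := by
    have h0 : Tendsto (fun x : ℝ => α * x) atBot atBot := by
      exact Tendsto.const_mul_atBot hα tendsto_id
    have h1 : Tendsto (fun x : ℝ => Real.exp (α * x) + C) atBot (nhds (0 + C)) :=
      (Real.tendsto_exp_atBot.comp h0).add tendsto_const_nhds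
    rw [zero_add] at h1
    exact ((Real.continuousAt_log hC.ne').tendsto.comp h1).const_mul (1/α)
  have := integral_Iic_of_hasDerivAt_of_tendsto' (a := v) (fun x _ => hderiv x)
    (aux_integrableOn_g hα hC v) htends
  rw [this, Real.log_div (by positivity) hC.ne']
  ring

theorem rhoU_bounds_from_rho_bounds (α : ℝ) (hα : 0 < α)
    (ρ : ℝ → ℝ) (hcont : Continuous ρ)
    (hrange : ∀ w, ρ w ∈ Set.Ioo (0:ℝ) 1)
    (hint1 : MeasureTheory.IntegrableOn (fun w => 1 - ρ w) (Set.Iic 0))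
    (hint2 : MeasureTheory.IntegrableOn ρ (Set.Ioi 0))
    (C₁ C₂ : ℝ) (hC : C₂ ≤ C₁) (hC₂ : 0 < C₂)
    (hbound : ∀ v : ℝ, rhoInf α v C₂ ≤ ρ v ∧ ρ v ≤ rhoInf α v C₁) :
    ∀ u > (0:ℝ),
      (C₂ / C₁) * rhoUInf α u ≤ rhoUOf ρ u ∧ rhoUOf ρ u ≤ (C₁ / C₂) * rhoUInf α u := by
  have hC₁ : 0 < C₁ := lt_of_lt_of_le hC₂ hC
  set f : ℝ → ℝ := fun w => 1 - ρ w with hf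
  have hfc : Continuous f := continuous_const.sub hcont
  -- integrability of f on each Iic v
  have hfint : ∀ v : ℝ, IntegrableOn f (Set.Iic v) := by
    intro v
    rcases le_or_gt v 0 with hv | hv
    · exact hint1.mono_set (Set.Iic_subset_Iic.2 hv)
    · rw [← Set.Iic_union_Ioc_eq_Iic hv.le]
      exact hint1.union (hfc.integrableOn_Ioc)
  -- lower/upper pointwise bounds on f
  have hflb : ∀ w, Real.exp (α * w) / (Real.exp (α * w) + C₁) ≤ f w := by
    intro w
    have h := (hbound w).2
    have hE := Real.exp_pos (α * w)
    have : ρ w ≤ C₁ / (Real.exp (α * w) + C₁) := h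
    have heq : 1 - C₁ / (Real.exp (α * w) + C₁)
        = Real.exp (α * w) / (Real.exp (α * w) + C₁) := by
      field_simp
      ring
    simp only [hf]
    linarith [heq ▸ (sub_le_sub_left this 1)]
  have hfub : ∀ w, f w ≤ Real.exp (α * w) / (Real.exp (α * w) + C₂) := by
    intro w
    have h := (hbound w).1
    have hE := Real.exp_pos (α * w)
    have heq : 1 - C₂ / (Real.exp (α * w) + C₂)
        = Real.exp (α * w) / (Real.exp (α * w) + C₂) := by
      field_simp
      ring
    simp only [hf]
    linarith [heq ▸ (sub_le_sub_left h 1)]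
  -- ζ bounds
  have hzlb : ∀ v, (1/α) * Real.log ((Real.exp (α * v) + C₁) / C₁) ≤ zetaFn ρ v := by
    intro v
    rw [← aux_integral_g hα hC₁ v]
    exact setIntegral_mono_on (aux_integrableOn_g hα hC₁ v) (hfint v)
      measurableSet_Iic (fun w _ => hflb w)
  have hzub : ∀ v, zetaFn ρ v ≤ (1/α) * Real.log ((Real.exp (α * v) + C₂) / C₂) := by
    intro v
    rw [← aux_integral_g hα hC₂ v]
    exact setIntegral_mono_on (hfint v) (aux_integrableOn_g hα hC₂ v)
      measurableSet_Iic (fun w _ => hfub w)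
  -- monotonicity of ζ
  have hmono : Monotone (zetaFn ρ) := by
    intro a b hab
    apply setIntegral_mono_set (hfint b)
    · filter_upwards with w
      have := (hrange w).2
      simp only [hf, Pi.zero_apply]
      linarith
    · exact (Set.Iic_subset_Iic.2 hab).eventuallyLE
  -- continuity of ζ
  have hzc : Continuous (zetaFn ρ) := by
    have : ∀ v, zetaFn ρ v = zetaFn ρ 0 + ∫ x in (0:ℝ)..v, f x := by
      intro v
      have := intervalIntegral.integral_Iic_sub_Iic (hfint 0) (hfint v)
      simp only [zetaFn, hf] at *
      linarith
    rw [show zetaFn ρ = fun v => zetaFn ρ 0 + ∫ x in (0:ℝ)..v, f x from funext this]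
    exact continuous_const.add (intervalIntegral.continuous_primitive
      (fun a b => hfc.intervalIntegrable a b) 0)
  intro u hu
  have hU1 : (0:ℝ) < Real.exp (α * u) - 1 := by
    have : (1:ℝ) < Real.exp (α * u) := by
      rw [← Real.exp_zero]
      exact Real.exp_lt_exp.2 (by positivity)
    linarith
  -- surjectivity: find v with ζ v = u
  have hsurj : ∃ v, zetaFn ρ v = u := by
    set b := (1/α) * Real.log (C₁ * (Real.exp (α * u) - 1)) with hb
    set a := (1/α) * Real.log (C₂ * (Real.exp (α * u) - 1) / 2) with ha
    have heb : Real.exp (α * b) = C₁ * (Real.exp (α * u) - 1) := by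
      rw [hb]; rw [show α * ((1/α) * Real.log (C₁ * (Real.exp (α * u) - 1)))
        = Real.log (C₁ * (Real.exp (α * u) - 1)) by field_simp]
      exact Real.exp_log (by positivity)
    have hea : Real.exp (α * a) = C₂ * (Real.exp (α * u) - 1) / 2 := by
      rw [ha]; rw [show α * ((1/α) * Real.log (C₂ * (Real.exp (α * u) - 1) / 2))
        = Real.log (C₂ * (Real.exp (α * u) - 1) / 2) by field_simp]
      exact Real.exp_log (by positivity)
    have hzb : u ≤ zetaFn ρ b := by
      refine le_trans ?_ (hzlb b)
      rw [heb]
      have : (C₁ * (Real.exp (α * u) - 1) + C₁) / C₁ = Real.exp (α * u) := by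
        field_simp; ring
      rw [this, Real.log_exp]
      field_simp
      exact le_rfl
    have hza : zetaFn ρ a < u := by
      refine lt_of_le_of_lt (hzub a) ?_
      rw [hea]
      have : (C₂ * (Real.exp (α * u) - 1) / 2 + C₂) / C₂ = (Real.exp (α * u) + 1) / 2 := by
        field_simp; ring
      rw [this]
      have hlt : Real.log ((Real.exp (α * u) + 1) / 2) < α * u := by
        nth_rewrite 2 [← Real.log_exp (α * u)]
        apply Real.log_lt_log (by positivity)
        linarith
      calc (1/α) * Real.log ((Real.exp (α*u)+1)/2) < (1/α)*(α*u) :=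
            mul_lt_mul_of_pos_left hlt (by positivity)
        _ = u := by field_simp
    have hab : a ≤ b := by
      by_contra h
      push_neg at h
      exact absurd (hmono h.le) (by linarith)
    have : u ∈ Set.Icc (zetaFn ρ a) (zetaFn ρ b) := ⟨hza.le, hzb⟩
    obtain ⟨v, _, hv⟩ := intermediate_value_Icc hab hzc.continuousOn this
    exact ⟨v, hv⟩
  have hvu : zetaFn ρ (zetaInv ρ u) = u := Function.invFun_eq hsurj
  set v₀ := zetaInv ρ u with hv₀
  set E := Real.exp (α * v₀) with hEdef
  set U := Real.exp (α * u) with hUdef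
  have hE : 0 < E := Real.exp_pos _
  have hEub : E ≤ C₁ * (U - 1) := by
    have h := hzlb v₀
    rw [hvu] at h
    have h2 : Real.log ((E + C₁)/C₁) ≤ α * u := by
      have := mul_le_mul_of_nonneg_left h hα.le
      calc Real.log ((E + C₁)/C₁) = α * ((1/α) * Real.log ((E + C₁)/C₁)) := by field_simp
        _ ≤ α * u := this
    have h3 : (E + C₁)/C₁ ≤ U := by
      rw [Real.log_le_iff_le_exp (by positivity)] at h2
      exact h2
    rw [div_le_iff₀ hC₁] at h3
    nlinarith
  have hElb : C₂ * (U - 1) ≤ E := by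
    have h := hzub v₀
    rw [hvu] at h
    have h2 : α * u ≤ Real.log ((E + C₂)/C₂) := by
      have := mul_le_mul_of_nonneg_left h hα.le
      calc α * u ≤ α * ((1/α) * Real.log ((E + C₂)/C₂)) := this
        _ = Real.log ((E + C₂)/C₂) := by field_simp
    have h3 : U ≤ (E + C₂)/C₂ := by
      rw [Real.le_log_iff_exp_le (by positivity)] at h2
      exact h2
    rw [le_div_iff₀ hC₂] at h3
    nlinarith
  set r := ρ v₀ with hr
  obtain ⟨hr0, hr1⟩ := hrange v₀
  have h1r : (0:ℝ) < 1 - r := by linarith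
  have hrub : r * (E + C₁) ≤ C₁ := by
    have := (hbound v₀).2
    rw [rhoInf] at this
    rw [← le_div_iff₀ (by positivity)]
    exact this
  have hrlb : C₂ ≤ r * (E + C₂) := by
    have := (hbound v₀).1
    rw [rhoInf] at this
    rw [← div_le_iff₀ (by positivity)]
    exact this
  have hrhoU : rhoUOf ρ u = r / (1 - r) := by
    rw [rhoUOf, ← hv₀, ← hr]
    field_simp
    ring
  rw [hrhoU, rhoUInf, ← hUdef]
  constructor
  · rw [show C₂ / C₁ * (1 / (U - 1)) = C₂ / (C₁ * (U - 1)) by field_simp]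
    rw [div_le_div_iff₀ (by positivity) h1r]
    nlinarith [mul_le_mul_of_nonneg_left hEub hr0.le]
  · rw [show C₁ / C₂ * (1 / (U - 1)) = C₁ / (C₂ * (U - 1)) by field_simp]
    rw [div_le_div_iff₀ h1r (by positivity)]
    nlinarith [mul_le_mul_of_nonneg_left hElb hr0.le]
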